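/- Second moment cross-term formula: In the homogeneous binary MAG model M(n;L), for any two distinct nodes u, v ∈ {1,…,n}, the probability that both u and v are isolated equals E[(1 − Q_L(A(u),A(v))) · (1 − Q̃_L(A(u),A(v)))^{n−2}], where for a,b ∈ {0,1}^L one sets Q_L(a,b) = ∏_{ℓ=1}^L q(a_ℓ,b_ℓ), Q*_L(a) = E[Q_L(a, A)], Q**_L(a,b) = E[Q_L(a, A) Q_L(b, A)] with A a random vector of L i.i.d. Bernoulli(μ(1)) bits, and Q̃_L(a,b) = Q*_L(a) + Q*_L(b) − Q**_L(a,b). -/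

import Mathlib

open MeasureTheory Filter

/-- Bernoulli measure on `Bool` with parameter `p` = probability of `true`. -/
noncomputable def bern (p : ℝ) : Measure Bool :=
  (Real.toNNReal p) • Measure.dirac true + (Real.toNNReal (1 - p)) • Measure.dirac false

/-- Uniform distribution on `[0,1]`. -/
noncomputable def unif01 : Measure ℝ := MeasureTheory.volume.restrict (Set.Icc (0:ℝ) 1)

/-- The probability space of the homogeneous binary MAG model `M(n;L)`:
i.i.d. Bernoulli attribute bits and, independently, i.i.d. Uniform(0,1) variables. -/
noncomputable def magMeasure (n L : ℕ) (p : ℝ) :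
    Measure ((Fin n → Fin L → Bool) × (Fin n × Fin n → ℝ)) :=
  (Measure.pi fun _ : Fin n => Measure.pi fun _ : Fin L => bern p).prod
    (Measure.pi fun _ : Fin n × Fin n => unif01)

/-- `Q_L(a,b) = ∏_{ℓ} q(a_ℓ, b_ℓ)`. -/
def QL {L : ℕ} (q : Bool → Bool → ℝ) (a b : Fin L → Bool) : ℝ :=
  ∏ ℓ : Fin L, q (a ℓ) (b ℓ)

/-- Distinct nodes `u, v` are adjacent iff `U(u,v) ≤ Q_L(A(u),A(v))`, where the uniform
variable attached to the unordered pair `{u,v}` is the one indexed by `(min u v, max u v)`. -/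
def Adj {n L : ℕ} (q : Bool → Bool → ℝ)
    (ω : (Fin n → Fin L → Bool) × (Fin n × Fin n → ℝ)) (u v : Fin n) : Prop :=
  u ≠ v ∧ ω.2 (min u v, max u v) ≤ QL q (ω.1 u) (ω.1 v)

/-- Node `u` is isolated if it is adjacent to no other node. -/
def Isolated {n L : ℕ} (q : Bool → Bool → ℝ)
    (ω : (Fin n → Fin L → Bool) × (Fin n × Fin n → ℝ)) (u : Fin n) : Prop :=
  ∀ v, ¬ Adj q ω u v

/-- `S_L(u)`: the number of attributes exhibited by node `u`. -/
def Scount {n L : ℕ} (ω : (Fin n → Fin L → Bool) × (Fin n × Fin n → ℝ)) (u : Fin n) : ℕ :=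
  (Finset.univ.filter fun ℓ : Fin L => ω.1 u ℓ = true).card

open scoped Classical in
/-- `I_n(L)`: the number of isolated nodes. -/
noncomputable def numIsolated {n L : ℕ} (q : Bool → Bool → ℝ)
    (ω : (Fin n → Fin L → Bool) × (Fin n × Fin n → ℝ)) : ℕ :=
  (Finset.univ.filter fun u : Fin n => Isolated q ω u).card

open scoped Classical in
/-- `I_n^{(k)}(L)`: the number of isolated nodes `u` with `S_L(u) = k`. -/
noncomputable def numIsolatedWith {n L : ℕ} (q : Bool → Bool → ℝ) (k : ℕ)
    (ω : (Fin n → Fin L → Bool) × (Fin n × Fin n → ℝ)) : ℕ :=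
  (Finset.univ.filter fun u : Fin n => Isolated q ω u ∧ Scount ω u = k).card

open scoped Classical in
/-- `ξ^{(k)}(u)`: the indicator that node `u` is isolated and `S_L(u) = k`. -/
noncomputable def xiInd {n L : ℕ} (q : Bool → Bool → ℝ) (k : ℕ)
    (ω : (Fin n → Fin L → Bool) × (Fin n × Fin n → ℝ)) (u : Fin n) : ℝ :=
  if Isolated q ω u ∧ Scount ω u = k then 1 else 0

/-- `Γ(a) = μ(0) q(a,0) + μ(1) q(a,1)`, with `μ(1) = μ1`, `μ(0) = 1 - μ1`. -/
def Gam (μ1 : ℝ) (q : Bool → Bool → ℝ) (a : Bool) : ℝ :=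
  (1 - μ1) * q a false + μ1 * q a true

/-- A scaling `L : ℕ → ℕ` is `ρ`-admissible if `L_n ~ ρ ln n` as `n → ∞`. -/
def Admissible (ρ : ℝ) (L : ℕ → ℕ) : Prop :=
  Asymptotics.IsEquivalent Filter.atTop (fun n => (L n : ℝ)) (fun n => ρ * Real.log n)

/-- `G(ν,μ) = (μ/ν)^ν ((1-μ)/(1-ν))^{1-ν}` (real powers; the conventions at `ν = 0,1`
agree with the continuous extension). -/
noncomputable def Gfun (ν μ : ℝ) : ℝ :=
  (μ / ν) ^ ν * ((1 - μ) / (1 - ν)) ^ (1 - ν)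

/-- `Q*_L(a) = E[Q_L(a,A)]`, `A` a vector of `L` i.i.d. Bernoulli(μ1) bits. -/
noncomputable def Qstar {L : ℕ} (μ1 : ℝ) (q : Bool → Bool → ℝ) (a : Fin L → Bool) : ℝ :=
  ∫ b, QL q a b ∂(Measure.pi fun _ : Fin L => bern μ1)

/-- `Q**_L(a,b) = E[Q_L(a,A) Q_L(b,A)]`. -/
noncomputable def Qstarstar {L : ℕ} (μ1 : ℝ) (q : Bool → Bool → ℝ) (a b : Fin L → Bool) : ℝ :=
  ∫ c, QL q a c * QL q b c ∂(Measure.pi fun _ : Fin L => bern μ1)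

/-- `Q̃_L(a,b) = Q*_L(a) + Q*_L(b) − Q**_L(a,b)`. -/
noncomputable def Qtilde {L : ℕ} (μ1 : ℝ) (q : Bool → Bool → ℝ) (a b : Fin L → Bool) : ℝ :=
  Qstar μ1 q a + Qstar μ1 q b - Qstarstar μ1 q a b

lemma mag_pair_eq {n : ℕ} {x y a b : Fin n}
    (h : ((min x y, max x y) : Fin n × Fin n) = (min a b, max a b)) :
    (x = a ∧ y = b) ∨ (x = b ∧ y = a) := by
  obtain ⟨h1, h2⟩ := Prod.mk.injEq .. ▸ h
  rcases le_total x y with hx | hx <;> rcases le_total a b with ha | ha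
  · rw [min_eq_left hx, min_eq_left ha] at h1
    rw [max_eq_right hx, max_eq_right ha] at h2
    exact Or.inl ⟨h1, h2⟩
  · rw [min_eq_left hx, min_eq_right ha] at h1
    rw [max_eq_right hx, max_eq_left ha] at h2
    exact Or.inr ⟨h1, h2⟩
  · rw [min_eq_right hx, min_eq_left ha] at h1
    rw [max_eq_left hx, max_eq_right ha] at h2
    exact Or.inr ⟨h2, h1⟩
  · rw [min_eq_right hx, min_eq_right ha] at h1
    rw [max_eq_left hx, max_eq_left ha] at h2
    exact Or.inl ⟨h2, h1⟩

lemma mag_unif01_prob : IsProbabilityMeasure unif01 := by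
  constructor
  rw [unif01, Measure.restrict_apply_univ, Real.volume_Icc]
  norm_num

lemma mag_unif01_Ioi {t : ℝ} (h0 : 0 ≤ t) (h1 : t ≤ 1) :
    unif01 (Set.Ioi t) = ENNReal.ofReal (1 - t) := by
  rw [unif01, Measure.restrict_apply' measurableSet_Icc]
  have hset : Set.Ioi t ∩ Set.Icc 0 1 = Set.Ioc t 1 := by
    ext r
    simp only [Set.mem_inter_iff, Set.mem_Ioi, Set.mem_Icc, Set.mem_Ioc]
    constructor
    · rintro ⟨hr, _, hr1⟩; exact ⟨hr, hr1⟩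
    · rintro ⟨hr, hr1⟩; exact ⟨hr, le_trans h0 hr.le, hr1⟩
  rw [hset, Real.volume_Ioc]

lemma mag_bern_prob {p : ℝ} (h0 : 0 ≤ p) (h1 : p ≤ 1) : IsProbabilityMeasure (bern p) := by
  constructor
  rw [bern]
  simp only [Measure.add_apply, Measure.smul_apply, measure_univ]
  rw [ENNReal.smul_def, ENNReal.smul_def, smul_eq_mul, smul_eq_mul, mul_one, mul_one,
    ← ENNReal.coe_add, ← Real.toNNReal_add h0 (by linarith)]
  norm_num

lemma mag_sum_split {N : ℕ} {E : Type*} [Fintype E] (u v : Fin N) (huv : u ≠ v)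
    (m : E → ℝ) (F : E → E → ℝ) (G : E → E → E → ℝ) :
    ∑ a : Fin N → E, ((∏ w, m (a w)) * F (a u) (a v) *
        ∏ w ∈ (Finset.univ.erase u).erase v, G (a u) (a v) (a w))
      = ∑ b : E, ∑ c : E, m b * m c * F b c * (∑ e, m e * G b c e) ^ (N - 2) := by
  classical
  have hvmem : v ∈ Finset.univ.erase u :=
    Finset.mem_erase.mpr ⟨Ne.symm huv, Finset.mem_univ v⟩
  set S' := (Finset.univ.erase u).erase v with hS'
  have hmemS' : ∀ w, w ∈ S' ↔ (w ≠ u ∧ w ≠ v) := by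
    intro w
    simp only [hS', Finset.mem_erase, Finset.mem_univ, and_true]
    tauto
  have hsummand : ∀ a : Fin N → E,
      (∏ w, m (a w)) * F (a u) (a v) * ∏ w ∈ S', G (a u) (a v) (a w)
      = m (a u) * m (a v) * F (a u) (a v) * ∏ w ∈ S', (m (a w) * G (a u) (a v) (a w)) := by
    intro a
    rw [Finset.prod_mul_distrib,
      ← Finset.mul_prod_erase Finset.univ (fun w => m (a w)) (Finset.mem_univ u),
      ← Finset.mul_prod_erase (Finset.univ.erase u) (fun w => m (a w)) hvmem]
    ring
  simp only [hsummand]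
  let T := {w : Fin N // w ≠ u ∧ w ≠ v}
  have hcardT : Fintype.card T = N - 2 := by
    rw [Fintype.card_subtype]
    have hfil : Finset.univ.filter (fun w : Fin N => w ≠ u ∧ w ≠ v) = S' := by
      ext w
      simp only [Finset.mem_filter, Finset.mem_univ, true_and]
      exact (hmemS' w).symm
    rw [hfil, hS', Finset.card_erase_of_mem hvmem,
      Finset.card_erase_of_mem (Finset.mem_univ u), Finset.card_univ, Fintype.card_fin]
    omega
  let toF : E × E × (T → E) → (Fin N → E) := fun p w =>
    if hw : w = u then p.1 else if hw' : w = v then p.2.1 else p.2.2 ⟨w, hw, hw'⟩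
  have htoFu : ∀ p, toF p u = p.1 := fun p => dif_pos rfl
  have htoFv : ∀ p, toF p v = p.2.1 := fun p => by
    simp [toF, Ne.symm huv]
  have htoFT : ∀ p (t : T), toF p t.1 = p.2.2 t := fun p t => by
    simp [toF, t.2.1, t.2.2]
  have hbij : Function.Bijective toF := by
    constructor
    · rintro ⟨b, c, f⟩ ⟨b', c', f'⟩ h
      have h1 := congrFun h u
      rw [htoFu, htoFu] at h1
      have h2 := congrFun h v
      rw [htoFv, htoFv] at h2
      have h3 : f = f' := funext fun t => by
        have := congrFun h t.1
        rwa [htoFT, htoFT] at this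
      simp_all
    · intro a
      refine ⟨(a u, a v, fun t => a t.1), funext fun w => ?_⟩
      by_cases hw : w = u
      · subst hw; rw [htoFu]
      · by_cases hw' : w = v
        · subst hw'; rw [htoFv]
        · exact htoFT (a u, a v, fun t => a t.1) ⟨w, hw, hw'⟩
  rw [← Fintype.sum_bijective toF hbij
    (fun p => m (toF p u) * m (toF p v) * F (toF p u) (toF p v) *
      ∏ w ∈ S', (m (toF p w) * G (toF p u) (toF p v) (toF p w)))
    _ (fun p => rfl)]
  rw [Fintype.sum_prod_type]
  refine Finset.sum_congr rfl fun b _ => ?_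
  rw [Fintype.sum_prod_type]
  refine Finset.sum_congr rfl fun c _ => ?_
  simp only [htoFu, htoFv]
  have hx : ∀ f : T → E,
      (∏ w ∈ S', (m (toF (b, c, f) w) * G b c (toF (b, c, f) w)))
        = ∏ t : T, (m (f t) * G b c (f t)) := by
    intro f
    rw [Finset.prod_subtype S' hmemS'
      (fun w => m (toF (b, c, f) w) * G b c (toF (b, c, f) w))]
    exact Finset.prod_congr rfl fun t _ => by rw [htoFT]
  simp only [hx]
  rw [← Finset.mul_sum]
  congr 1
  rw [show (Finset.univ : Finset (T → E)) = Fintype.piFinset fun _ => Finset.univ from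
      (Fintype.piFinset_univ).symm,
    Finset.sum_prod_piFinset Finset.univ
    (fun (t : T) (e : E) => m e * G b c e), Finset.prod_const, Finset.card_univ, hcardT]

theorem mag_second_moment_cross_term
    (n L : ℕ) (hn : 2 ≤ n) (hL : 1 ≤ L)
    (μ1 : ℝ) (hμ1 : 0 < μ1) (hμ1' : μ1 < 1)
    (q : Bool → Bool → ℝ) (hq : ∀ a b, 0 < q a b ∧ q a b < 1)
    (hqsym : q false true = q true false)
    (u v : Fin n) (huv : u ≠ v) :
    magMeasure n L μ1 {ω | Isolated q ω u ∧ Isolated q ω v}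
      = ENNReal.ofReal
          (∫ ω, (1 - QL q (ω.1 u) (ω.1 v)) *
              (1 - Qtilde μ1 q (ω.1 u) (ω.1 v)) ^ (n - 2)
            ∂(magMeasure n L μ1)) := by
  classical
  have hqsym' : ∀ a b, q a b = q b a := by
    intro a b; cases a <;> cases b <;> simp [hqsym]
  have hQLsym : ∀ a b : Fin L → Bool, QL q a b = QL q b a := by
    intro a b; exact Finset.prod_congr rfl fun ℓ _ => hqsym' _ _
  have hQL0 : ∀ a b : Fin L → Bool, 0 ≤ QL q a b := fun a b =>
    Finset.prod_nonneg fun ℓ _ => (hq _ _).1.le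
  have hQL1 : ∀ a b : Fin L → Bool, QL q a b ≤ 1 := fun a b =>
    Finset.prod_le_one (fun ℓ _ => (hq _ _).1.le) (fun ℓ _ => (hq _ _).2.le)
  haveI hbp : IsProbabilityMeasure (bern μ1) := mag_bern_prob hμ1.le hμ1'.le
  haveI hup : IsProbabilityMeasure unif01 := mag_unif01_prob
  have hvmem' : v ∈ Finset.univ.erase u :=
    Finset.mem_erase.mpr ⟨Ne.symm huv, Finset.mem_univ v⟩
  set νE : Measure (Fin L → Bool) := Measure.pi fun _ : Fin L => bern μ1 with hνE
  set μA : Measure (Fin n → Fin L → Bool) := Measure.pi fun _ : Fin n => νE with hμA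
  set μU : Measure (Fin n × Fin n → ℝ) := Measure.pi fun _ : Fin n × Fin n => unif01 with hμU
  have hmag : magMeasure n L μ1 = μA.prod μU := rfl
  -- measurability of the event
  have hQmeas : ∀ x y : Fin n,
      Measurable (fun ω : (Fin n → Fin L → Bool) × (Fin n × Fin n → ℝ) =>
        QL q (ω.1 x) (ω.1 y)) := by
    intro x y
    have h1 : Measurable fun ω : (Fin n → Fin L → Bool) × (Fin n × Fin n → ℝ) =>
        (ω.1 x, ω.1 y) :=
      ((measurable_pi_apply x).comp measurable_fst).prodMk
        ((measurable_pi_apply y).comp measurable_fst)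
    exact (measurable_of_finite
      (fun p : (Fin L → Bool) × (Fin L → Bool) => QL q p.1 p.2)).comp h1
  have hIsoMeas : ∀ x : Fin n,
      MeasurableSet {ω : (Fin n → Fin L → Bool) × (Fin n × Fin n → ℝ) | Isolated q ω x} := by
    intro x
    have heq : {ω : (Fin n → Fin L → Bool) × (Fin n × Fin n → ℝ) | Isolated q ω x}
        = ⋂ w, {ω | Adj q ω x w}ᶜ := by
      ext ω; simp [Isolated, Set.mem_iInter]
    rw [heq]
    refine MeasurableSet.iInter fun w => (MeasurableSet.compl ?_)
    by_cases hxw : x = w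
    · have : {ω : (Fin n → Fin L → Bool) × (Fin n × Fin n → ℝ) | Adj q ω x w} = ∅ := by
        ext ω; simp [Adj, hxw]
      rw [this]; exact MeasurableSet.empty
    · have : {ω : (Fin n → Fin L → Bool) × (Fin n × Fin n → ℝ) | Adj q ω x w}
          = {ω | ω.2 (min x w, max x w) ≤ QL q (ω.1 x) (ω.1 w)} := by
        ext ω; simp [Adj, hxw]
      rw [this]
      exact measurableSet_le (measurable_snd.eval) (hQmeas x w)
  have hSet : MeasurableSet {ω : (Fin n → Fin L → Bool) × (Fin n × Fin n → ℝ) |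
      Isolated q ω u ∧ Isolated q ω v} := by
    have : {ω : (Fin n → Fin L → Bool) × (Fin n × Fin n → ℝ) |
        Isolated q ω u ∧ Isolated q ω v} = {ω | Isolated q ω u} ∩ {ω | Isolated q ω v} := rfl
    rw [this]; exact (hIsoMeas u).inter (hIsoMeas v)
  -- the conditional (slice) probability
  have hslice : ∀ a : Fin n → Fin L → Bool,
      μU (Prod.mk a ⁻¹' {ω : (Fin n → Fin L → Bool) × (Fin n × Fin n → ℝ) |
          Isolated q ω u ∧ Isolated q ω v})
        = ENNReal.ofReal ((∏ w ∈ Finset.univ.erase u, (1 - QL q (a u) (a w))) *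
            ∏ w ∈ (Finset.univ.erase u).erase v, (1 - QL q (a v) (a w))) := by
    intro a
    set Sa : (Fin n × Fin n) → Set ℝ := fun i =>
      {r | (∀ w, w ≠ u → i = (min u w, max u w) → QL q (a u) (a w) < r) ∧
           (∀ w, w ≠ v → i = (min v w, max v w) → QL q (a v) (a w) < r)} with hSa
    have hIso : ∀ (x : Fin n × Fin n → ℝ) (z : Fin n),
        Isolated q (a, x) z ↔ ∀ w, w ≠ z → QL q (a z) (a w) < x (min z w, max z w) := by
      intro x z
      constructor
      · intro h w hw
        have h2 := h w
        simp only [Adj, not_and, not_le] at h2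
        exact h2 (Ne.symm hw)
      · intro h w
        simp only [Adj, not_and, not_le]
        intro hzw
        exact h w (Ne.symm hzw)
    have hpre : Prod.mk a ⁻¹' {ω : (Fin n → Fin L → Bool) × (Fin n × Fin n → ℝ) |
        Isolated q ω u ∧ Isolated q ω v} = Set.pi Set.univ Sa := by
      ext x
      simp only [Set.mem_preimage, Set.mem_setOf_eq, Set.mem_pi, Set.mem_univ,
        forall_true_left, hIso, hSa]
      constructor
      · rintro ⟨h1, h2⟩ i
        exact ⟨fun w hw hi => by rw [hi]; exact h1 w hw,
               fun w hw hi => by rw [hi]; exact h2 w hw⟩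
      · intro h
        exact ⟨fun w hw => (h (min u w, max u w)).1 w hw rfl,
               fun w hw => (h (min v w, max v w)).2 w hw rfl⟩
    rw [hpre, hμU, Measure.pi_pi]
    have hSeval : ∀ z w : Fin n, (z = u ∨ z = v) → w ≠ z →
        Sa (min z w, max z w) = Set.Ioi (QL q (a z) (a w)) := by
      intro z w hz hw
      ext r
      simp only [hSa, Set.mem_setOf_eq, Set.mem_Ioi]
      constructor
      · rintro ⟨h1, h2⟩
        rcases hz with rfl | rfl
        · exact h1 w hw rfl
        · exact h2 w hw rfl
      · intro hr
        constructor
        · intro w' hw' hi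
          rcases mag_pair_eq hi with ⟨hza, hwb⟩ | ⟨hza, hwb⟩
          · rw [← hza, ← hwb]; exact hr
          · rw [← hza, ← hwb, hQLsym]; exact hr
        · intro w' hw' hi
          rcases mag_pair_eq hi with ⟨hza, hwb⟩ | ⟨hza, hwb⟩
          · rw [← hza, ← hwb]; exact hr
          · rw [← hza, ← hwb, hQLsym]; exact hr
    set J1 : Finset (Fin n × Fin n) :=
      (Finset.univ.erase u).image (fun w => (min u w, max u w)) with hJ1
    set J2 : Finset (Fin n × Fin n) :=
      ((Finset.univ.erase u).erase v).image (fun w => (min v w, max v w)) with hJ2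
    have hS_univ : ∀ i ∉ J1 ∪ J2, Sa i = Set.univ := by
      intro i hi
      rw [Finset.mem_union, not_or] at hi
      obtain ⟨hi1, hi2⟩ := hi
      apply Set.eq_univ_of_forall
      intro r
      constructor
      · intro w hw hiw
        exact absurd (Finset.mem_image.mpr
          ⟨w, Finset.mem_erase.mpr ⟨hw, Finset.mem_univ w⟩, hiw.symm⟩) hi1
      · intro w hw hiw
        by_cases hwu : w = u
        · subst hwu
          refine absurd (Finset.mem_image.mpr ⟨v, hvmem', ?_⟩) hi1
          rw [hiw, min_comm, max_comm]
        · exact absurd (Finset.mem_image.mpr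
            ⟨w, Finset.mem_erase.mpr ⟨hw, Finset.mem_erase.mpr ⟨hwu, Finset.mem_univ w⟩⟩,
              hiw.symm⟩) hi2
    have hJdisj : Disjoint J1 J2 := by
      rw [Finset.disjoint_left]
      rintro i hi1 hi2
      obtain ⟨w, hw, rfl⟩ := Finset.mem_image.mp hi1
      obtain ⟨w', hw', heq⟩ := Finset.mem_image.mp hi2
      rw [Finset.mem_erase] at hw
      rw [Finset.mem_erase, Finset.mem_erase] at hw'
      rcases mag_pair_eq heq with ⟨h1, h2⟩ | ⟨h1, h2⟩
      · exact huv (h1.symm)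
      · exact hw'.2.1 h2
    have h1le : ∀ w : Fin n, unif01 (Set.Ioi (QL q (a u) (a w)))
        = ENNReal.ofReal (1 - QL q (a u) (a w)) := fun w =>
      mag_unif01_Ioi (hQL0 _ _) (hQL1 _ _)
    calc (∏ i : Fin n × Fin n, unif01 (Sa i))
        = ∏ i ∈ J1 ∪ J2, unif01 (Sa i) := by
          refine (Finset.prod_subset (Finset.subset_univ _) fun i _ hi => ?_).symm
          rw [hS_univ i hi]
          exact measure_univ
      _ = (∏ i ∈ J1, unif01 (Sa i)) * ∏ i ∈ J2, unif01 (Sa i) := Finset.prod_union hJdisj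
      _ = (∏ w ∈ Finset.univ.erase u, unif01 (Sa (min u w, max u w))) *
          ∏ w ∈ (Finset.univ.erase u).erase v, unif01 (Sa (min v w, max v w)) := by
          rw [hJ1, hJ2, Finset.prod_image, Finset.prod_image]
          · intro x hx y hy hxy
            rcases mag_pair_eq hxy with ⟨_, h2⟩ | ⟨_, h2⟩
            · exact h2
            · exact absurd h2 (Finset.mem_erase.mp hx).1
          · intro x hx y hy hxy
            rcases mag_pair_eq hxy with ⟨_, h2⟩ | ⟨_, h2⟩
            · exact h2
            · exact absurd h2 (Finset.mem_erase.mp hx).1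
      _ = (∏ w ∈ Finset.univ.erase u, ENNReal.ofReal (1 - QL q (a u) (a w))) *
          ∏ w ∈ (Finset.univ.erase u).erase v, ENNReal.ofReal (1 - QL q (a v) (a w)) := by
          congr 1
          · refine Finset.prod_congr rfl fun w hw => ?_
            rw [hSeval u w (Or.inl rfl) (Finset.mem_erase.mp hw).1]
            exact mag_unif01_Ioi (hQL0 _ _) (hQL1 _ _)
          · refine Finset.prod_congr rfl fun w hw => ?_
            rw [hSeval v w (Or.inr rfl) (Finset.mem_erase.mp hw).1]
            exact mag_unif01_Ioi (hQL0 _ _) (hQL1 _ _)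
      _ = ENNReal.ofReal ((∏ w ∈ Finset.univ.erase u, (1 - QL q (a u) (a w))) *
            ∏ w ∈ (Finset.univ.erase u).erase v, (1 - QL q (a v) (a w))) := by
          rw [← ENNReal.ofReal_prod_of_nonneg (fun w _ => sub_nonneg.mpr (hQL1 _ _)),
            ← ENNReal.ofReal_prod_of_nonneg (fun w _ => sub_nonneg.mpr (hQL1 _ _)),
            ← ENNReal.ofReal_mul
              (Finset.prod_nonneg fun w _ => sub_nonneg.mpr (hQL1 _ _))]
  -- abbreviations for weights
  set m : (Fin L → Bool) → ℝ := fun e => (νE {e}).toReal with hm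
  have hm0 : ∀ e, 0 ≤ m e := fun e => ENNReal.toReal_nonneg
  have hW : ∀ a : Fin n → Fin L → Bool, (μA {a}).toReal = ∏ w, m (a w) := by
    intro a
    rw [hμA, ← Set.univ_pi_singleton a, Measure.pi_pi, ENNReal.toReal_prod]
  have hsum1 : ∑ e, m e = 1 := by
    have h := integral_fintype (μ := νE) (f := fun _ => (1 : ℝ)) (Integrable.of_finite)
    simp only [measureReal_def, integral_const, measure_univ, ENNReal.toReal_one, one_smul, smul_eq_mul,
      mul_one] at h
    exact h.symm
  have hQstar : ∀ b, Qstar μ1 q b = ∑ e, m e * QL q b e := by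
    intro b
    rw [Qstar, integral_fintype (Integrable.of_finite)]
    simp only [measureReal_def, smul_eq_mul]
    rfl
  have hQstarstar : ∀ b c, Qstarstar μ1 q b c = ∑ e, m e * (QL q b e * QL q c e) := by
    intro b c
    rw [Qstarstar, integral_fintype (Integrable.of_finite)]
    simp only [measureReal_def, smul_eq_mul]
    rfl
  have hH : ∀ b c, 1 - Qtilde μ1 q b c = ∑ e, m e * ((1 - QL q b e) * (1 - QL q c e)) := by
    intro b c
    rw [Qtilde, hQstar, hQstar, hQstarstar]
    have hterm : ∀ e : Fin L → Bool, m e * ((1 - QL q b e) * (1 - QL q c e))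
        = m e - m e * QL q b e - m e * QL q c e + m e * (QL q b e * QL q c e) :=
      fun e => by ring
    rw [Finset.sum_congr rfl fun e _ => hterm e, Finset.sum_add_distrib,
      Finset.sum_sub_distrib, Finset.sum_sub_distrib, hsum1]
    ring
  -- RHS computation
  have hRHS : (∫ ω, (1 - QL q (ω.1 u) (ω.1 v)) *
          (1 - Qtilde μ1 q (ω.1 u) (ω.1 v)) ^ (n - 2) ∂(μA.prod μU))
      = ∑ a : Fin n → Fin L → Bool, (μA {a}).toReal *
          ((1 - QL q (a u) (a v)) * (1 - Qtilde μ1 q (a u) (a v)) ^ (n - 2)) := by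
    have hmeasf : Measurable (fun a : Fin n → Fin L → Bool =>
        (1 - QL q (a u) (a v)) * (1 - Qtilde μ1 q (a u) (a v)) ^ (n - 2)) :=
      measurable_of_finite _
    have hmap : ∫ a, (1 - QL q (a u) (a v)) * (1 - Qtilde μ1 q (a u) (a v)) ^ (n - 2) ∂μA
        = ∫ ω, (1 - QL q (ω.1 u) (ω.1 v)) *
            (1 - Qtilde μ1 q (ω.1 u) (ω.1 v)) ^ (n - 2) ∂(μA.prod μU) := by
      conv_lhs => rw [← Measure.fst_prod (μ := μA) (ν := μU), Measure.fst]
      exact integral_map measurable_fst.aemeasurable hmeasf.aestronglyMeasurable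
    rw [← hmap, integral_fintype (Integrable.of_finite)]
    simp only [measureReal_def, smul_eq_mul]
  -- LHS computation
  rw [hmag, Measure.prod_apply hSet, lintegral_congr hslice, lintegral_fintype]
  -- turn the ENNReal sum into ofReal of a real sum
  have hgnn : ∀ a : Fin n → Fin L → Bool,
      0 ≤ (∏ w ∈ Finset.univ.erase u, (1 - QL q (a u) (a w))) *
        ∏ w ∈ (Finset.univ.erase u).erase v, (1 - QL q (a v) (a w)) :=
    fun a => mul_nonneg
      (Finset.prod_nonneg fun w _ => sub_nonneg.mpr (hQL1 _ _))
      (Finset.prod_nonneg fun w _ => sub_nonneg.mpr (hQL1 _ _))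
  have hstep : ∀ a : Fin n → Fin L → Bool,
      ENNReal.ofReal ((∏ w ∈ Finset.univ.erase u, (1 - QL q (a u) (a w))) *
          ∏ w ∈ (Finset.univ.erase u).erase v, (1 - QL q (a v) (a w))) * μA {a}
      = ENNReal.ofReal ((μA {a}).toReal *
          ((∏ w ∈ Finset.univ.erase u, (1 - QL q (a u) (a w))) *
            ∏ w ∈ (Finset.univ.erase u).erase v, (1 - QL q (a v) (a w)))) := by
    intro a
    rw [ENNReal.ofReal_mul ENNReal.toReal_nonneg, ENNReal.ofReal_toReal (measure_ne_top _ _)]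
    ring
  rw [Finset.sum_congr rfl fun a _ => hstep a,
    ← ENNReal.ofReal_sum_of_nonneg fun a _ =>
      mul_nonneg ENNReal.toReal_nonneg (hgnn a), hRHS]
  congr 1
  -- the combinatorial identity
  have hgsplit : ∀ a : Fin n → Fin L → Bool,
      (μA {a}).toReal *
        ((∏ w ∈ Finset.univ.erase u, (1 - QL q (a u) (a w))) *
          ∏ w ∈ (Finset.univ.erase u).erase v, (1 - QL q (a v) (a w)))
      = (∏ w, m (a w)) * (1 - QL q (a u) (a v)) *
          ∏ w ∈ (Finset.univ.erase u).erase v,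
            ((1 - QL q (a u) (a w)) * (1 - QL q (a v) (a w))) := by
    intro a
    rw [hW, ← Finset.mul_prod_erase (Finset.univ.erase u)
        (fun w => 1 - QL q (a u) (a w)) hvmem', Finset.prod_mul_distrib]
    ring
  have hfsplit : ∀ a : Fin n → Fin L → Bool,
      (μA {a}).toReal * ((1 - QL q (a u) (a v)) * (1 - Qtilde μ1 q (a u) (a v)) ^ (n - 2))
      = (∏ w, m (a w)) *
          ((1 - QL q (a u) (a v)) * (1 - Qtilde μ1 q (a u) (a v)) ^ (n - 2)) *
          ∏ w ∈ (Finset.univ.erase u).erase v, (1 : ℝ) := by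
    intro a
    rw [hW, Finset.prod_const_one, mul_one]
  rw [Finset.sum_congr rfl fun a _ => hgsplit a,
    Finset.sum_congr rfl fun a _ => hfsplit a,
    mag_sum_split u v huv m (fun b c => 1 - QL q b c)
      (fun b c e => (1 - QL q b e) * (1 - QL q c e)),
    mag_sum_split u v huv m
      (fun b c => (1 - QL q b c) * (1 - Qtilde μ1 q b c) ^ (n - 2))
      (fun _ _ _ => (1 : ℝ))]
  refine Finset.sum_congr rfl fun b _ => Finset.sum_congr rfl fun c _ => ?_
  rw [← hH b c]
  simp only [mul_one, hsum1, one_pow]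
  ring
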